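/- arXiv:2507.15611 — 2 statements merged into one kernel-verified Lean document; each statement's English description precedes it below -/
import Mathlib

section
/- For all natural numbers s ≥ 2, t ≥ 2, u ≥ 2, the bidegree (4, 4 + n_{s,t,u}) component of E, i.e. E^{4, 2^{s+t+u}+2^{s+t}+2^s+1}, is a one-dimensional F₂-vector space with basis the class of the monomial h₀ h_s h_{s+t} h_{s+t+u}; in particular this monomial is nonzero in E. -/
noncomputable section

open MvPolynomial

/-- Generators of Chen's algebra `E` in homological degrees ≤ 4.
Here `g i` denotes the generator `g_{i+1}` (the family `g` starts at index 1). -/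
inductive Gen : Type
  | h (i : ℕ)
  | c (i : ℕ)
  | d (i : ℕ)
  | e (i : ℕ)
  | f (i : ℕ)
  | g (i : ℕ)
  | p (i : ℕ)
  | D3 (i : ℕ)
  | p' (i : ℕ)

/-- Homological degree of the generators. -/
def hdeg : Gen → ℕ
  | .h _ => 1
  | .c _ => 3
  | _ => 4

/-- Internal degree of the generators. -/
def ideg : Gen → ℕ
  | .h i => 2 ^ i
  | .c i => 2 ^ (i + 3) + 2 ^ (i + 1) + 2 ^ i
  | .d i => 2 ^ (i + 4) + 2 ^ (i + 1)
  | .e i => 2 ^ (i + 4) + 2 ^ (i + 2) + 2 ^ i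
  | .f i => 2 ^ (i + 4) + 2 ^ (i + 2) + 2 ^ (i + 1)
  | .g i => 2 ^ (i + 4) + 2 ^ (i + 3)      -- internal degree of `g_{i+1}`
  | .p i => 2 ^ (i + 5) + 2 ^ (i + 2) + 2 ^ i
  | .D3 i => 2 ^ (i + 6) + 2 ^ i
  | .p' i => 2 ^ (i + 6) + 2 ^ (i + 3) + 2 ^ i

abbrev P := MvPolynomial Gen (ZMod 2)

/-- Chen's relations in homological degrees ≤ 4:
`hᵢhᵢ₊₁ = 0`, `hᵢhᵢ₊₂² = 0`, `hᵢ²hᵢ₊₃² = 0`, `hᵢ³ = hᵢ₋₁²hᵢ₊₁` (i ≥ 1), and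
`hⱼcᵢ = 0` for `j ∈ {i-1, i, i+2, i+3}`. -/
def rels : Set P :=
  ⋃ i : ℕ,
    ({ X (Gen.h i) * X (Gen.h (i + 1)),
       X (Gen.h i) * X (Gen.h (i + 2)) ^ 2,
       X (Gen.h i) ^ 2 * X (Gen.h (i + 3)) ^ 2,
       X (Gen.h (i + 1)) ^ 3 - X (Gen.h i) ^ 2 * X (Gen.h (i + 2)),
       X (Gen.h i) * X (Gen.c (i + 1)),
       X (Gen.h i) * X (Gen.c i),
       X (Gen.h (i + 2)) * X (Gen.c i),
       X (Gen.h (i + 3)) * X (Gen.c i) } : Set P)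

def relIdeal : Ideal P := Ideal.span rels

/-- Chen's algebra `E`, isomorphic to `Ext_A^{k,*}(ℤ/2, ℤ/2)` in homological degrees `k ≤ 4`. -/
abbrev E := P ⧸ relIdeal

def mkE : P →ₐ[ZMod 2] E := Ideal.Quotient.mkₐ (ZMod 2) relIdeal

/-- The bidegree `(k, d)` component `E^{k,d}` of `E`: the image of the space of polynomials
that are weighted homogeneous of homological degree `k` and internal degree `d`. -/
def component (k d : ℕ) : Submodule (ZMod 2) E :=
  Submodule.map mkE.toLinearMap
    (weightedHomogeneousSubmodule (ZMod 2) hdeg k ⊓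
      weightedHomogeneousSubmodule (ZMod 2) ideg d)

/-- `n_{s,t,u} = 2^{s+t+u} + 2^{s+t} + 2^s - 3`. -/
def nstu (s t u : ℕ) : ℕ := 2 ^ (s + t + u) + 2 ^ (s + t) + 2 ^ s - 3

/-! ### Auxiliary lemmas -/


lemma pow_sum_eq_zero {M : Multiset ℕ} (h : (M.map (2 ^ ·)).sum = 0) : M = 0 := by
  rw [Multiset.sum_eq_zero_iff] at h
  have : M.map (2 ^ ·) = 0 := by
    apply Multiset.eq_zero_of_forall_notMem
    intro x hx
    have h0 := h x hx
    obtain ⟨i, -, rfl⟩ := Multiset.mem_map.mp hx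
    exact (pow_pos two_pos i).ne' h0
  simpa using this

open Multiset in
/-- Uniqueness of binary representations: if a multiset of exponents, of cardinality at most
that of a duplicate-free multiset `S`, gives the same sum of powers of two as `S`, then it
equals `S`. -/
lemma lemA : ∀ n (M S : Multiset ℕ), S.Nodup → (M.map (2 ^ ·)).sum = n →
    (S.map (2 ^ ·)).sum = n → Multiset.card M ≤ Multiset.card S → M = S := by
  intro n
  induction n using Nat.strong_induction_on with
  | _ n IH =>
  intro M S hnd hM hS hcard
  rcases Nat.eq_zero_or_pos n with rfl | hn
  · rw [pow_sum_eq_zero hM, pow_sum_eq_zero hS]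
  have decomp : ∀ T : Multiset ℕ, T = replicate (T.count 0) 0 + T.filter (· ≠ 0) := by
    intro T
    conv_lhs => rw [← Multiset.filter_add_not (· = 0) T]
    rw [Multiset.filter_eq']
  have sum_decomp : ∀ T : Multiset ℕ,
      (T.map (2 ^ ·)).sum = T.count 0 + 2 * (((T.filter (· ≠ 0)).map (· - 1)).map (2 ^ ·)).sum := by
    intro T
    conv_lhs => rw [decomp T]
    rw [Multiset.map_add, Multiset.sum_add, Multiset.map_replicate, Multiset.sum_replicate]
    congr 1
    · simp
    · rw [Multiset.map_map]
      have : (T.filter (· ≠ 0)).map (2 ^ ·)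
          = (T.filter (· ≠ 0)).map (fun i => 2 * 2 ^ (i - 1)) := by
        apply Multiset.map_congr rfl
        intro i hi
        have : i ≠ 0 := by simpa using (Multiset.mem_filter.mp hi).2
        rw [← pow_succ']
        congr 1
        omega
      rw [this, Multiset.sum_map_mul_left]
      rfl
  set zM := M.count 0 with hzM
  set zS := S.count 0 with hzS
  set MP := ((M.filter (· ≠ 0)).map (· - 1)) with hMP
  set SP := ((S.filter (· ≠ 0)).map (· - 1)) with hSP
  have hM' : zM + 2 * (MP.map (2 ^ ·)).sum = n := by rw [← sum_decomp M, hM]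
  have hS' : zS + 2 * (SP.map (2 ^ ·)).sum = n := by rw [← sum_decomp S, hS]
  have hzS1 : zS ≤ 1 := (Multiset.nodup_iff_count_le_one.mp hnd) 0
  set TM := (MP.map (2 ^ ·)).sum
  set TS := (SP.map (2 ^ ·)).sum
  have cardMP : Multiset.card MP + zM = Multiset.card M := by
    rw [hMP, Multiset.card_map]
    conv_rhs => rw [decomp M]
    simp [add_comm]
    exact hzM
  have cardSP : Multiset.card SP + zS = Multiset.card S := by
    rw [hSP, Multiset.card_map]
    conv_rhs => rw [decomp S]
    simp [add_comm]
    exact hzS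
  have hSPnd : SP.Nodup := by
    apply Multiset.Nodup.map_on _ (Multiset.Nodup.filter _ hnd)
    intro x hx y hy hxy
    have hx0 : x ≠ 0 := by simpa using (Multiset.mem_filter.mp hx).2
    have hy0 : y ≠ 0 := by simpa using (Multiset.mem_filter.mp hy).2
    omega
  have succ_pred : ∀ T : Multiset ℕ, ((T.filter (· ≠ 0)).map (· - 1)).map (· + 1)
      = T.filter (· ≠ 0) := by
    intro T
    rw [Multiset.map_map]
    conv_rhs => rw [← Multiset.map_id (T.filter (· ≠ 0))]
    apply Multiset.map_congr rfl
    intro i hi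
    have : i ≠ 0 := by simpa using (Multiset.mem_filter.mp hi).2
    simp only [Function.comp_apply, id_eq]
    omega
  have hzMS : zM = zS := by
    by_contra hne
    have hpar : zM % 2 = zS % 2 := by omega
    set k := (zM - zS) / 2 with hk
    have hzM2 : zS ≤ zM := by omega
    have hkeq : zM = zS + 2 * k := by omega
    have hk1 : 1 ≤ k := by omega
    have hsum' : ((replicate k 0 + MP).map (2 ^ ·)).sum = TS := by
      rw [Multiset.map_add, Multiset.sum_add, Multiset.map_replicate, Multiset.sum_replicate]
      simp only [pow_zero, smul_eq_mul, mul_one]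
      omega
    have hTSlt : TS < n := by omega
    have hcard' : Multiset.card (replicate k 0 + MP) ≤ Multiset.card SP := by
      rw [Multiset.card_add, Multiset.card_replicate]
      omega
    have := IH TS hTSlt (replicate k 0 + MP) SP hSPnd hsum' rfl hcard'
    have : Multiset.card (replicate k 0 + MP) = Multiset.card SP := by rw [this]
    rw [Multiset.card_add, Multiset.card_replicate] at this
    omega
  have hTMTS : TM = TS := by omega
  have hTSlt : TS < n := by omega
  have hcard2 : Multiset.card MP ≤ Multiset.card SP := by omega
  have hMPSP : MP = SP := IH TS hTSlt MP SP hSPnd (by rw [← hTMTS]) rfl hcard2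
  have : M.filter (· ≠ 0) = S.filter (· ≠ 0) := by
    rw [← succ_pred M, ← succ_pred S, ← hMP, ← hSP, hMPSP]
  conv_lhs => rw [decomp M]
  conv_rhs => rw [decomp S]
  rw [this, show M.count 0 = S.count 0 from hzMS]

/-- The multiset of positions of binary digits of `ideg g`. -/
def bits : Gen → Multiset ℕ
  | .h i => {i}
  | .c i => {i, i + 1, i + 3}
  | .d i => {i + 1, i + 4}
  | .e i => {i, i + 2, i + 4}
  | .f i => {i + 1, i + 2, i + 4}
  | .g i => {i + 3, i + 4}
  | .p i => {i, i + 2, i + 5}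
  | .D3 i => {i, i + 6}
  | .p' i => {i, i + 3, i + 6}

lemma bits_sum (g : Gen) : ((bits g).map (2 ^ ·)).sum = ideg g := by
  cases g <;> simp [bits, ideg] <;> ring

lemma bits_card_le (g : Gen) : Multiset.card (bits g) ≤ hdeg g := by
  cases g <;> simp [bits, hdeg]

lemma bits_card_eq {g : Gen} (h : Multiset.card (bits g) = hdeg g) :
    (∃ i, g = Gen.h i) ∨ (∃ i, g = Gen.c i) := by
  cases g <;> simp_all [bits, hdeg]

lemma weight_eq_sum (w' : Gen → ℕ) (f : Gen →₀ ℕ) :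
    (Finsupp.weight w') f = ∑ g ∈ f.support, f g * w' g := by
  rw [Finsupp.weight_apply, Finsupp.sum]
  exact Finset.sum_congr rfl fun g _ => by rw [smul_eq_mul]

lemma weight_single (w' : Gen → ℕ) (a : Gen) (n : ℕ) :
    (Finsupp.weight w') (Finsupp.single a n) = n * w' a := by
  rw [Finsupp.weight_apply, Finsupp.sum_single_index] <;> simp

section Main

variable (s t u : ℕ)

/-- The exponent finsupp of the monomial `h₀ h_s h_{s+t} h_{s+t+u}`. -/
def Mf : Gen →₀ ℕ :=
  Finsupp.single (Gen.h 0) 1 + Finsupp.single (Gen.h s) 1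
    + Finsupp.single (Gen.h (s + t)) 1 + Finsupp.single (Gen.h (s + t + u)) 1

variable {s t u}
variable (hs : 2 ≤ s) (ht : 2 ≤ t) (hu : 2 ≤ u)

include hs ht hu

lemma Mf_le (g : Gen) : Mf s t u g ≤ 1 := by
  classical
  cases g <;> simp [Mf, Finsupp.single_apply] <;> split_ifs <;> omega

lemma Mf_h {j : ℕ} (h : 1 ≤ Mf s t u (Gen.h j)) :
    j = 0 ∨ j = s ∨ j = s + t ∨ j = s + t + u := by
  classical
  simp [Mf, Finsupp.single_apply] at h
  split_ifs at h <;> omega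

lemma Mf_c (i : ℕ) : Mf s t u (Gen.c i) = 0 := by
  classical
  simp [Mf, Finsupp.single_apply]

/-- classification: any exponent of homological degree 4 and the given internal degree is `Mf`. -/
lemma classify (w : Gen →₀ ℕ)
    (h4 : ∑ g ∈ w.support, w g * hdeg g = 4)
    (hN : ∑ g ∈ w.support, w g * ideg g = 2 ^ (s + t + u) + 2 ^ (s + t) + 2 ^ s + 1) :
    w = Mf s t u := by
  classical
  set S : Multiset ℕ := {0, s, s + t, s + t + u} with hS
  have hSnd : S.Nodup := by
    simp only [hS, Multiset.insert_eq_cons, Multiset.nodup_cons, Multiset.mem_cons,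
      Multiset.mem_singleton, Multiset.nodup_singleton, and_true, not_or]
    omega
  have hScard : Multiset.card S = 4 := by simp [hS]
  have hSsum : (S.map (2 ^ ·)).sum = 2 ^ (s + t + u) + 2 ^ (s + t) + 2 ^ s + 1 := by
    simp [hS, Multiset.insert_eq_cons]
    omega
  have gapS : ∀ x, x ∈ S → x + 1 ∈ S → False := by
    intro x
    simp only [hS, Multiset.insert_eq_cons, Multiset.mem_cons, Multiset.mem_singleton]
    omega
  set B : Multiset ℕ := ∑ g ∈ w.support, w g • bits g with hB
  have hBsum : (B.map (2 ^ ·)).sum = 2 ^ (s + t + u) + 2 ^ (s + t) + 2 ^ s + 1 := by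
    rw [hB, ← hN]
    rw [show ((∑ g ∈ w.support, w g • bits g).map (2 ^ ·)).sum
        = ∑ g ∈ w.support, ((w g • bits g).map (2 ^ ·)).sum from ?_]
    · apply Finset.sum_congr rfl
      intro g _
      rw [Multiset.map_nsmul, Multiset.sum_nsmul, bits_sum, smul_eq_mul]
    · induction w.support using Finset.induction with
      | empty => simp
      | insert _ _ hni ih =>
          rw [Finset.sum_insert hni, Finset.sum_insert hni, Multiset.map_add, Multiset.sum_add, ih]
  have hBcard : Multiset.card B ≤ 4 := by
    rw [hB, ← h4]
    rw [show Multiset.card (∑ g ∈ w.support, w g • bits g)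
        = ∑ g ∈ w.support, Multiset.card (w g • bits g) from ?_]
    · apply Finset.sum_le_sum
      intro g _
      rw [Multiset.card_nsmul]
      exact Nat.mul_le_mul_left _ (bits_card_le g)
    · induction w.support using Finset.induction with
      | empty => simp
      | insert _ _ hni ih => rw [Finset.sum_insert hni, Finset.sum_insert hni, Multiset.card_add, ih]
  have hBS : B = S := lemA _ B S hSnd hBsum hSsum (by omega)
  have hcard4 : ∑ g ∈ w.support, w g * Multiset.card (bits g) = 4 := by
    have : Multiset.card B = 4 := by rw [hBS, hScard]
    rw [hB] at this
    rw [← this]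
    symm
    rw [show Multiset.card (∑ g ∈ w.support, w g • bits g)
        = ∑ g ∈ w.support, Multiset.card (w g • bits g) from ?_]
    · exact Finset.sum_congr rfl fun g _ => by rw [Multiset.card_nsmul]
    · induction w.support using Finset.induction with
      | empty => simp
      | insert _ _ hni ih => rw [Finset.sum_insert hni, Finset.sum_insert hni, Multiset.card_add, ih]
  have hpt : ∀ g ∈ w.support, w g * Multiset.card (bits g) = w g * hdeg g := by
    apply (Finset.sum_eq_sum_iff_of_le
      (fun g _ => Nat.mul_le_mul_left _ (bits_card_le g))).mp
    rw [hcard4, h4]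
  have memB : ∀ g ∈ w.support, ∀ a ∈ bits g, a ∈ S := by
    intro g hg a ha
    rw [← hBS, hB, Multiset.mem_sum]
    exact ⟨g, hg, Multiset.mem_nsmul.mpr ⟨Finsupp.mem_support_iff.mp hg, ha⟩⟩
  have honly : ∀ g ∈ w.support, ∃ i, g = Gen.h i := by
    intro g hg
    rcases bits_card_eq (Nat.eq_of_mul_eq_mul_left
        (Nat.pos_of_ne_zero (Finsupp.mem_support_iff.mp hg)) (hpt g hg)) with h | ⟨i, rfl⟩
    · exact h
    · exact absurd (memB _ hg (i + 1) (by simp [bits]))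
        (fun hx => gapS i (memB _ hg i (by simp [bits])) hx)
  have hz : ∀ g, (∀ i, g ≠ Gen.h i) → w g = 0 := by
    intro g hgh
    by_contra hne
    obtain ⟨i, rfl⟩ := honly g (Finsupp.mem_support_iff.mpr hne)
    exact hgh i rfl
  have hcnt : ∀ j, w (Gen.h j) = Multiset.count j S := by
    intro j
    rw [← hBS, hB]
    have h1 : Multiset.count j (∑ g ∈ w.support, w g • bits g)
        = ∑ g ∈ w.support, w g * Multiset.count j (bits g) := by
      rw [← Multiset.coe_countAddMonoidHom, map_sum]
      exact Finset.sum_congr rfl fun g _ => by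
        rw [map_nsmul, Multiset.coe_countAddMonoidHom, smul_eq_mul]
    rw [h1]
    have h2 : ∀ g ∈ w.support, w g * Multiset.count j (bits g)
        = if g = Gen.h j then w g else 0 := by
      intro g hg
      obtain ⟨i, rfl⟩ := honly g hg
      by_cases hij : i = j
      · subst hij; simp [bits]
      · simp [bits, Multiset.count_singleton, hij, Gen.h.injEq, Ne.symm hij]
    rw [Finset.sum_congr rfl h2, Finset.sum_ite_eq' w.support (Gen.h j) (fun g => w g)]
    split_ifs with hmem
    · rfl
    · exact (Finsupp.notMem_support_iff.mp hmem)
  ext g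
  cases g with
  | h j =>
      rw [hcnt j]
      simp only [Mf, Finsupp.add_apply, Finsupp.single_apply, Gen.h.injEq, hS,
        Multiset.insert_eq_cons, Multiset.count_cons, Multiset.count_singleton]
      split_ifs <;> omega
  | c i => rw [hz _ (by intro i h; cases h)]; simp [Mf, Finsupp.single_apply]
  | d i => rw [hz _ (by intro i h; cases h)]; simp [Mf, Finsupp.single_apply]
  | e i => rw [hz _ (by intro i h; cases h)]; simp [Mf, Finsupp.single_apply]
  | f i => rw [hz _ (by intro i h; cases h)]; simp [Mf, Finsupp.single_apply]
  | g i => rw [hz _ (by intro i h; cases h)]; simp [Mf, Finsupp.single_apply]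
  | p i => rw [hz _ (by intro i h; cases h)]; simp [Mf, Finsupp.single_apply]
  | D3 i => rw [hz _ (by intro i h; cases h)]; simp [Mf, Finsupp.single_apply]
  | p' i => rw [hz _ (by intro i h; cases h)]; simp [Mf, Finsupp.single_apply]

omit hs ht hu in
lemma X_eq (g : Gen) : (X g : P) = monomial (Finsupp.single g 1) 1 := rfl

omit hs ht hu in
lemma hm_eq : (X (Gen.h 0) * X (Gen.h s) * X (Gen.h (s + t)) * X (Gen.h (s + t + u)) : P)
    = monomial (Mf s t u) 1 := by
  rw [X_eq, X_eq, X_eq, X_eq, monomial_mul, monomial_mul, monomial_mul]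
  norm_num [Mf]

/-- The monomial is not in the ideal of relations. -/
lemma not_mem_relIdeal : (monomial (Mf s t u) 1 : P) ∉ relIdeal := by
  classical
  intro hmem
  have key : ∀ x ∈ relIdeal, ∀ v : Gen →₀ ℕ, v ≤ Mf s t u → coeff v x = 0 := by
    intro x hx
    have hx' : x ∈ Submodule.span P rels := hx
    clear hx
    induction hx' using Submodule.span_induction with
    | mem r hr =>
        simp only [rels, Set.mem_iUnion, Set.mem_insert_iff, Set.mem_singleton_iff] at hr
        obtain ⟨i, hr⟩ := hr
        have aux1 : ∀ (a b : Gen) (m n : ℕ) (v : Gen →₀ ℕ), v ≤ Mf s t u →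
            (Finsupp.single a m + Finsupp.single b n ≤ Mf s t u → False) →
            coeff v (X a ^ m * X b ^ n : P) = 0 := by
          intro a b m n v hv hcon
          rw [X_pow_eq_monomial, X_pow_eq_monomial, monomial_mul, one_mul, coeff_monomial]
          split_ifs with heq
          · exact absurd (heq ▸ hv) hcon
          · rfl
        rcases hr with rfl | rfl | rfl | rfl | rfl | rfl | rfl | rfl <;> intro v hv
        · rw [show (X (Gen.h i) * X (Gen.h (i + 1)) : P)
              = X (Gen.h i) ^ 1 * X (Gen.h (i + 1)) ^ 1 by ring]
          apply aux1 _ _ _ _ _ hv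
          intro hle
          have e1 := Mf_h hs ht hu (Finsupp.single_le_iff.mp ((self_le_add_right _ _).trans hle))
          have e2 := Mf_h hs ht hu (Finsupp.single_le_iff.mp ((self_le_add_left _ _).trans hle))
          omega
        · rw [show (X (Gen.h i) * X (Gen.h (i + 2)) ^ 2 : P)
              = X (Gen.h i) ^ 1 * X (Gen.h (i + 2)) ^ 2 by ring]
          apply aux1 _ _ _ _ _ hv
          intro hle
          have e2 := Finsupp.single_le_iff.mp ((self_le_add_left _ _).trans hle)
          have := Mf_le hs ht hu (Gen.h (i + 2))
          omega
        · apply aux1 _ _ _ _ _ hv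
          intro hle
          have e2 := Finsupp.single_le_iff.mp ((self_le_add_right _ _).trans hle)
          have := Mf_le hs ht hu (Gen.h i)
          omega
        · rw [coeff_sub]
          rw [show (X (Gen.h (i + 1)) ^ 3 : P) = X (Gen.h (i + 1)) ^ 3 * X (Gen.h (i + 1)) ^ 0 by
            ring]
          rw [show (X (Gen.h i) ^ 2 * X (Gen.h (i + 2)) : P)
              = X (Gen.h i) ^ 2 * X (Gen.h (i + 2)) ^ 1 by ring]
          rw [aux1 _ _ _ _ _ hv ?_, aux1 _ _ _ _ _ hv ?_, sub_zero]
          · intro hle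
            have e2 := Finsupp.single_le_iff.mp ((self_le_add_right _ _).trans hle)
            have := Mf_le hs ht hu (Gen.h i)
            omega
          · intro hle
            have e2 := Finsupp.single_le_iff.mp ((self_le_add_right _ _).trans hle)
            have := Mf_le hs ht hu (Gen.h (i + 1))
            omega
        · rw [show (X (Gen.h i) * X (Gen.c (i + 1)) : P)
              = X (Gen.h i) ^ 1 * X (Gen.c (i + 1)) ^ 1 by ring]
          apply aux1 _ _ _ _ _ hv
          intro hle
          have e2 := Finsupp.single_le_iff.mp ((self_le_add_left _ _).trans hle)
          rw [Mf_c hs ht hu] at e2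
          omega
        · rw [show (X (Gen.h i) * X (Gen.c i) : P) = X (Gen.h i) ^ 1 * X (Gen.c i) ^ 1 by ring]
          apply aux1 _ _ _ _ _ hv
          intro hle
          have e2 := Finsupp.single_le_iff.mp ((self_le_add_left _ _).trans hle)
          rw [Mf_c hs ht hu] at e2
          omega
        · rw [show (X (Gen.h (i + 2)) * X (Gen.c i) : P)
              = X (Gen.h (i + 2)) ^ 1 * X (Gen.c i) ^ 1 by ring]
          apply aux1 _ _ _ _ _ hv
          intro hle
          have e2 := Finsupp.single_le_iff.mp ((self_le_add_left _ _).trans hle)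
          rw [Mf_c hs ht hu] at e2
          omega
        · rw [show (X (Gen.h (i + 3)) * X (Gen.c i) : P)
              = X (Gen.h (i + 3)) ^ 1 * X (Gen.c i) ^ 1 by ring]
          apply aux1 _ _ _ _ _ hv
          intro hle
          have e2 := Finsupp.single_le_iff.mp ((self_le_add_left _ _).trans hle)
          rw [Mf_c hs ht hu] at e2
          omega
    | zero => intro v hv; simp
    | add x y hxm hym ihx ihy =>
        intro v hv
        rw [coeff_add, ihx v hv, ihy v hv, add_zero]
    | smul a x hxm ih =>
        intro v hv
        rw [smul_eq_mul, coeff_mul]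
        apply Finset.sum_eq_zero
        intro pq hpq
        rw [Finset.HasAntidiagonal.mem_antidiagonal] at hpq
        have h2 : pq.2 ≤ v := by
          rw [Finsupp.le_def]
          intro g
          have := DFunLike.congr_fun hpq g
          simp only [Finsupp.add_apply] at this
          omega
        rw [ih pq.2 (h2.trans hv), mul_zero]
  have := key _ hmem (Mf s t u) le_rfl
  rw [coeff_monomial, if_pos rfl] at this
  exact one_ne_zero this

end Main

/-- For all `s, t, u ≥ 2`, `E^{4, 4 + n_{s,t,u}} = E^{4, 2^{s+t+u}+2^{s+t}+2^s+1}` is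
one-dimensional over `F₂` with basis the class of `h₀h_sh_{s+t}h_{s+t+u}`; in particular this
monomial is nonzero in `E`. -/
theorem stmt4 (s t u : ℕ) (hs : 2 ≤ s) (ht : 2 ≤ t) (hu : 2 ≤ u) :
    component 4 (2 ^ (s + t + u) + 2 ^ (s + t) + 2 ^ s + 1) =
        Submodule.span (ZMod 2)
          {mkE (X (Gen.h 0) * X (Gen.h s) * X (Gen.h (s + t)) * X (Gen.h (s + t + u)))} ∧
      mkE (X (Gen.h 0) * X (Gen.h s) * X (Gen.h (s + t)) * X (Gen.h (s + t + u))) ≠ 0 := by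
  classical
  have hmMf := hm_eq (s := s) (t := t) (u := u)
  have hV : (weightedHomogeneousSubmodule (ZMod 2) hdeg 4 ⊓
      weightedHomogeneousSubmodule (ZMod 2) ideg
        (2 ^ (s + t + u) + 2 ^ (s + t) + 2 ^ s + 1))
      = Submodule.span (ZMod 2) {(monomial (Mf s t u) 1 : P)} := by
    apply le_antisymm
    · intro p hp
      obtain ⟨hp4, hpN⟩ := hp
      rw [SetLike.mem_coe, mem_weightedHomogeneousSubmodule] at hp4 hpN
      have hps : p = monomial (Mf s t u) (coeff (Mf s t u) p) := by
        apply MvPolynomial.ext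
        intro v
        rw [coeff_monomial]
        split_ifs with h
        · rw [h]
        · by_contra hne
          exact h ((classify hs ht hu v
            (by rw [← weight_eq_sum]; exact hp4 hne)
            (by rw [← weight_eq_sum]; exact hpN hne)).symm)
      rw [Submodule.mem_span_singleton]
      exact ⟨coeff (Mf s t u) p, by
        rw [smul_monomial, smul_eq_mul, mul_one, ← hps]⟩
    · rw [Submodule.span_le, Set.singleton_subset_iff, SetLike.mem_coe]
      refine ⟨isWeightedHomogeneous_monomial _ _ _ ?_, isWeightedHomogeneous_monomial _ _ _ ?_⟩
      · simp only [Mf, map_add, weight_single, hdeg]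
        try norm_num
      · simp only [Mf, map_add, weight_single, ideg]
        try omega
  constructor
  · rw [component, hV, Submodule.map_span, Set.image_singleton, hmMf]
    rfl
  · rw [hmMf]
    intro h0
    apply not_mem_relIdeal hs ht hu
    rwa [mkE, Ideal.Quotient.mkₐ_eq_mk, Ideal.Quotient.eq_zero_iff_mem] at h0
end
end

section
/- For all natural numbers t ≥ 1 with t ≠ 2 and u ≥ 1, the bidegree (4, 4 + n_{1,t,u}) component E^{4, 2^{t+u+1}+2^{t+1}+3} of E is the zero vector space. -/
noncomputable section

open MvPolynomial

/-! ### Auxiliary arithmetic lemmas -/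

lemma four_dvd_two_pow {k : ℕ} (hk : 2 ≤ k) : (4:ℕ) ∣ 2 ^ k := by
  obtain ⟨m, rfl⟩ := Nat.exists_eq_add_of_le hk
  exact ⟨2 ^ m, by ring⟩

lemma pow_cases (j : ℕ) : (j = 0 ∧ 2 ^ j = 1) ∨ (j = 1 ∧ 2 ^ j = 2) ∨ (2 ≤ j ∧ (4:ℕ) ∣ 2 ^ j) := by
  rcases j with _ | _ | m
  · exact Or.inl ⟨rfl, rfl⟩
  · exact Or.inr (Or.inl ⟨rfl, rfl⟩)
  · exact Or.inr (Or.inr ⟨by omega, four_dvd_two_pow (by omega)⟩)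

lemma not_pow_eq (t u m : ℕ) (hu : 1 ≤ u) : (2:ℕ) ^ m ≠ 2 ^ (t + u + 1) + 2 ^ (t + 1) := by
  intro h
  have hpos : 0 < (2:ℕ) ^ (t + u + 1) := pow_pos (by norm_num) _
  have hp1 : 0 < (2:ℕ) ^ (t + 1) := pow_pos (by norm_num) _
  have hlt : (2:ℕ) ^ (t + 1) < 2 ^ m := by omega
  have h1 : t + 1 < m := (Nat.pow_lt_pow_iff_right (by norm_num)).mp hlt
  have hdvd : (2:ℕ) ^ (t + 2) ∣ 2 ^ (t + 1) := by
    have := Nat.dvd_sub (pow_dvd_pow 2 (show t + 2 ≤ m by omega))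
      (pow_dvd_pow 2 (show t + 2 ≤ t + u + 1 by omega))
    rwa [show (2:ℕ) ^ m - 2 ^ (t + u + 1) = 2 ^ (t + 1) by omega] at this
  have hle := Nat.le_of_dvd hp1 hdvd
  have : (2:ℕ) ^ (t + 1) < 2 ^ (t + 2) := Nat.pow_lt_pow_right (by norm_num) (by omega)
  omega

lemma aux_lt (a b c e : ℕ) (hab : a < b) (hc : a < c) (he : a < e) :
    2 ^ a + 2 ^ b ≠ 2 ^ c + 2 ^ e := by
  intro h
  have hpa : 0 < (2:ℕ) ^ a := pow_pos (by norm_num) _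
  have hpb : 0 < (2:ℕ) ^ b := pow_pos (by norm_num) _
  have hdvd : (2:ℕ) ^ (a + 1) ∣ 2 ^ a := by
    have := Nat.dvd_sub (Nat.dvd_add (pow_dvd_pow 2 (show a + 1 ≤ c from hc))
      (pow_dvd_pow 2 (show a + 1 ≤ e from he))) (pow_dvd_pow 2 (show a + 1 ≤ b from hab))
    rwa [show (2:ℕ) ^ c + 2 ^ e - 2 ^ b = 2 ^ a by omega] at this
  have hle := Nat.le_of_dvd hpa hdvd
  have : (2:ℕ) ^ a < 2 ^ (a + 1) := Nat.pow_lt_pow_right (by norm_num) (by omega)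
  omega

lemma pow_pair {a b c e : ℕ} (hab : a < b) (hce : c < e) (h : 2 ^ a + 2 ^ b = 2 ^ c + 2 ^ e) :
    a = c ∧ b = e := by
  rcases lt_trichotomy a c with hac | rfl | hac
  · exact absurd h (aux_lt a b c e hab hac (hac.trans hce))
  · have hb : (2:ℕ) ^ b = 2 ^ e := by omega
    exact ⟨rfl, Nat.pow_right_injective (by norm_num) hb⟩
  · exact absurd h.symm (aux_lt c e a b hce hac (hac.trans hab))

/-! ### Weights and monomial combinatorics -/

lemma weight_single_s5 (w : Gen → ℕ) (g : Gen) :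
    Finsupp.weight w (Finsupp.single g 1) = w g := by
  simp [Finsupp.weight_apply, Finsupp.sum_single_index]

lemma weight_single_add (w : Gen → ℕ) (g : Gen) (σ : Gen →₀ ℕ) :
    Finsupp.weight w (Finsupp.single g 1 + σ) = w g + Finsupp.weight w σ := by
  rw [map_add, weight_single_s5]

lemma weight_hdeg_eq_zero {σ : Gen →₀ ℕ} (h : Finsupp.weight hdeg σ = 0) : σ = 0 := by
  have inst : Finsupp.NonTorsionWeight ℕ hdeg :=
    Finsupp.nonTorsionWeight_of ℕ (w := hdeg) (fun i => by cases i <;> simp [hdeg])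
  rwa [Finsupp.weight_eq_zero_iff_eq_zero] at h

lemma peel {σ : Gen →₀ ℕ} (h : σ ≠ 0) : ∃ g σ', σ = Finsupp.single g 1 + σ' := by
  obtain ⟨g, hg⟩ := Finsupp.support_nonempty_iff.mpr h
  refine ⟨g, σ - Finsupp.single g 1, ?_⟩
  have hg1 : 1 ≤ σ g := Nat.one_le_iff_ne_zero.mpr (Finsupp.mem_support_iff.mp hg)
  ext x
  rcases eq_or_ne x g with rfl | hx
  · simp; omega
  · simp [Finsupp.single_apply, Ne.symm hx]

lemma hdeg_split (g : Gen) : (∃ i, g = Gen.h i) ∨ (∃ i, g = Gen.c i) ∨ hdeg g = 4 := by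
  cases g
  · exact Or.inl ⟨_, rfl⟩
  · exact Or.inr (Or.inl ⟨_, rfl⟩)
  all_goals exact Or.inr (Or.inr rfl)

lemma peel_weight {σ : Gen →₀ ℕ} {n : ℕ} (hn : n ≠ 0) (h : Finsupp.weight hdeg σ = n) :
    ∃ g σ', σ = Finsupp.single g 1 + σ' ∧ hdeg g + Finsupp.weight hdeg σ' = n := by
  have hσ : σ ≠ 0 := by
    rintro rfl
    rw [map_zero] at h
    exact hn h.symm
  obtain ⟨g, σ', rfl⟩ := peel hσ
  rw [weight_single_add] at h
  exact ⟨g, σ', rfl, h⟩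

/-- Classification of monomials of homological degree 4. -/
lemma classify_s5 (σ : Gen →₀ ℕ) (h4 : Finsupp.weight hdeg σ = 4) :
    (∃ x, hdeg x = 4 ∧ σ = Finsupp.single x 1) ∨
    (∃ i j, σ = Finsupp.single (Gen.h j) 1 + Finsupp.single (Gen.c i) 1) ∨
    (∃ j1 j2 j3 j4, σ = Finsupp.single (Gen.h j1) 1 + (Finsupp.single (Gen.h j2) 1 +
      (Finsupp.single (Gen.h j3) 1 + Finsupp.single (Gen.h j4) 1))) := by
  obtain ⟨g1, σ1, rfl, hw1⟩ := peel_weight (by norm_num) h4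
  rcases hdeg_split g1 with ⟨j1, rfl⟩ | ⟨i1, rfl⟩ | hg1
  · -- g1 = h j1, weight σ1 = 3
    have hw1' : Finsupp.weight hdeg σ1 = 3 := by simp [hdeg] at hw1; omega
    obtain ⟨g2, σ2, rfl, hw2⟩ := peel_weight (by norm_num) hw1'
    rcases hdeg_split g2 with ⟨j2, rfl⟩ | ⟨i2, rfl⟩ | hg2
    · -- weight σ2 = 2
      have hw2' : Finsupp.weight hdeg σ2 = 2 := by simp [hdeg] at hw2; omega
      obtain ⟨g3, σ3, rfl, hw3⟩ := peel_weight (by norm_num) hw2'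
      rcases hdeg_split g3 with ⟨j3, rfl⟩ | ⟨i3, rfl⟩ | hg3
      · -- weight σ3 = 1
        have hw3' : Finsupp.weight hdeg σ3 = 1 := by simp [hdeg] at hw3; omega
        obtain ⟨g4, σ4, rfl, hw4⟩ := peel_weight (by norm_num) hw3'
        rcases hdeg_split g4 with ⟨j4, rfl⟩ | ⟨i4, rfl⟩ | hg4
        · have hσ4 : σ4 = 0 := weight_hdeg_eq_zero (by simp [hdeg] at hw4; omega)
          subst hσ4
          exact Or.inr (Or.inr ⟨j1, j2, j3, j4, by simp⟩)
        · simp [hdeg] at hw4; omega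
        · omega
      · simp [hdeg] at hw3; omega
      · omega
    · -- g2 = c i2 : weight σ2 = 0
      have hσ2 : σ2 = 0 := weight_hdeg_eq_zero (by simp [hdeg] at hw2; omega)
      subst hσ2
      exact Or.inr (Or.inl ⟨i2, j1, by simp⟩)
    · omega
  · -- g1 = c i1, weight σ1 = 1
    have hw1' : Finsupp.weight hdeg σ1 = 1 := by simp [hdeg] at hw1; omega
    obtain ⟨g2, σ2, rfl, hw2⟩ := peel_weight (by norm_num) hw1'
    rcases hdeg_split g2 with ⟨j2, rfl⟩ | ⟨i2, rfl⟩ | hg2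
    · have hσ2 : σ2 = 0 := weight_hdeg_eq_zero (by simp [hdeg] at hw2; omega)
      subst hσ2
      refine Or.inr (Or.inl ⟨i1, j2, ?_⟩)
      rw [add_zero, add_comm]
    · simp [hdeg] at hw2; omega
    · omega
  · -- hdeg g1 = 4, weight σ1 = 0
    have hσ1 : σ1 = 0 := weight_hdeg_eq_zero (by omega)
    subst hσ1
    exact Or.inl ⟨g1, hg1, by simp⟩

/-! ### Ideal membership helpers -/

lemma mem_rels {r : P} (i : ℕ)
    (hr : r ∈ ({ X (Gen.h i) * X (Gen.h (i + 1)),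
       X (Gen.h i) * X (Gen.h (i + 2)) ^ 2,
       X (Gen.h i) ^ 2 * X (Gen.h (i + 3)) ^ 2,
       X (Gen.h (i + 1)) ^ 3 - X (Gen.h i) ^ 2 * X (Gen.h (i + 2)),
       X (Gen.h i) * X (Gen.c (i + 1)),
       X (Gen.h i) * X (Gen.c i),
       X (Gen.h (i + 2)) * X (Gen.c i),
       X (Gen.h (i + 3)) * X (Gen.c i) } : Set P)) : r ∈ relIdeal :=
  Ideal.subset_span (Set.mem_iUnion.mpr ⟨i, hr⟩)

lemma hh_mem (i : ℕ) : (X (Gen.h i) * X (Gen.h (i + 1)) : P) ∈ relIdeal :=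
  mem_rels i (by left; rfl)

lemma hc1_mem (i : ℕ) : (X (Gen.h i) * X (Gen.c (i + 1)) : P) ∈ relIdeal :=
  mem_rels i (by right; right; right; right; left; rfl)

lemma hc2_mem (i : ℕ) : (X (Gen.h i) * X (Gen.c i) : P) ∈ relIdeal :=
  mem_rels i (by right; right; right; right; right; left; rfl)

lemma hc3_mem (i : ℕ) : (X (Gen.h (i + 2)) * X (Gen.c i) : P) ∈ relIdeal :=
  mem_rels i (by right; right; right; right; right; right; left; rfl)

lemma hc4_mem (i : ℕ) : (X (Gen.h (i + 3)) * X (Gen.c i) : P) ∈ relIdeal :=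
  mem_rels i (by right; right; right; right; right; right; right; exact rfl)

lemma dvd_mem {r s : P} (h : r ∈ relIdeal) (hd : r ∣ s) : s ∈ relIdeal := by
  obtain ⟨q, rfl⟩ := hd
  exact Ideal.mul_mem_right _ _ h

lemma monomial_single_X (g : Gen) :
    (monomial (Finsupp.single g 1) (1 : ZMod 2) : P) = X g := rfl

lemma monomial_add_split (a b : Gen →₀ ℕ) :
    (monomial (a + b) (1 : ZMod 2) : P) = monomial a 1 * monomial b 1 := by
  rw [monomial_mul, one_mul]

/-! ### The key computation -/

lemma key (t u : ℕ) (ht : 1 ≤ t) (ht2 : t ≠ 2) (hu : 1 ≤ u) (σ : Gen →₀ ℕ)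
    (h4 : Finsupp.weight hdeg σ = 4)
    (hd : Finsupp.weight ideg σ = 2 ^ (t + u + 1) + 2 ^ (t + 1) + 3) :
    (monomial σ (1 : ZMod 2) : P) ∈ relIdeal := by
  have hD1 : (4:ℕ) ∣ 2 ^ (t + u + 1) := four_dvd_two_pow (by omega)
  have hD2 : (4:ℕ) ∣ 2 ^ (t + 1) := four_dvd_two_pow (by omega)
  rcases classify_s5 σ h4 with ⟨x, hx4, rfl⟩ | ⟨i, j, rfl⟩ | ⟨j1, j2, j3, j4, rfl⟩
  · -- case A : a single degree-4 generator; impossible arithmetically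
    exfalso
    rw [weight_single_s5] at hd
    rcases x with i | i | i | i | i | i | i | i | i
    · simp [hdeg] at hx4
    · simp [hdeg] at hx4
    all_goals (
      simp only [ideg] at hd
      have c1 := pow_cases i
      have c2 := pow_cases (i + 1)
      have q2 := four_dvd_two_pow (k := i + 2) (by omega)
      have q3 := four_dvd_two_pow (k := i + 3) (by omega)
      have q4 := four_dvd_two_pow (k := i + 4) (by omega)
      have q5 := four_dvd_two_pow (k := i + 5) (by omega)
      have q6 := four_dvd_two_pow (k := i + 6) (by omega)
      omega)
  · -- case B : h_j * c_i
    rw [weight_single_add, weight_single_s5] at hd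
    simp only [ideg] at hd
    have cj := pow_cases j
    have ci := pow_cases i
    have ci1 := pow_cases (i + 1)
    have qi3 := four_dvd_two_pow (k := i + 3) (by omega)
    have e0 : i = 0 → (2:ℕ) ^ (i + 3) = 8 ∧ (2:ℕ) ^ (i + 1) = 2 := by rintro rfl; norm_num
    have e1 : i = 1 → (2:ℕ) ^ (i + 3) = 16 ∧ (2:ℕ) ^ (i + 1) = 4 := by rintro rfl; norm_num
    have Hj : j ≤ 3 ∨ (2:ℕ) ^ j + 8 ≠ 2 ^ (t + u + 1) + 2 ^ (t + 1) := by
      rcases le_or_gt j 3 with h' | h'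
      · exact Or.inl h'
      · right
        intro hc
        have h8 : (2:ℕ) ^ 3 = 8 := by norm_num
        obtain ⟨h3, -⟩ := pow_pair (a := 3) (b := j) (c := t + 1) (e := t + u + 1)
          h' (by omega) (by omega)
        exact ht2 (by omega)
    have hij : (i = 0 ∧ (j = 2 ∨ j = 3)) ∨ (i = 1 ∧ j = 0) := by omega
    rw [monomial_add_split, monomial_single_X, monomial_single_X]
    rcases hij with ⟨rfl, rfl | rfl⟩ | ⟨rfl, rfl⟩
    · simpa using hc3_mem 0
    · simpa using hc4_mem 0
    · simpa using hc1_mem 0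
  · -- case C : four h's
    rw [weight_single_add, weight_single_add, weight_single_add, weight_single_s5] at hd
    simp only [ideg] at hd
    have c1 := pow_cases j1
    have c2 := pow_cases j2
    have c3 := pow_cases j3
    have c4 := pow_cases j4
    have g1 := not_pow_eq t u j1 hu
    have g2 := not_pow_eq t u j2 hu
    have g3 := not_pow_eq t u j3 hu
    have g4 := not_pow_eq t u j4 hu
    have hz : (j1 = 0 ∨ j2 = 0 ∨ j3 = 0 ∨ j4 = 0) ∧
        (j1 = 1 ∨ j2 = 1 ∨ j3 = 1 ∨ j4 = 1) := by omega
    rw [monomial_add_split, monomial_add_split, monomial_add_split,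
      monomial_single_X, monomial_single_X, monomial_single_X, monomial_single_X]
    have hrel : (X (Gen.h 0) * X (Gen.h 1) : P) ∈ relIdeal := by simpa using hh_mem 0
    obtain ⟨hz0, hz1⟩ := hz
    rcases hz0 with rfl | rfl | rfl | rfl <;> rcases hz1 with h1 | h1 | h1 | h1 <;>
      first
        | exact absurd h1 (by omega)
        | (subst h1
           first
            | exact dvd_mem hrel ⟨X (Gen.h j3) * X (Gen.h j4), by ring⟩
            | exact dvd_mem hrel ⟨X (Gen.h j2) * X (Gen.h j4), by ring⟩
            | exact dvd_mem hrel ⟨X (Gen.h j2) * X (Gen.h j3), by ring⟩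
            | exact dvd_mem hrel ⟨X (Gen.h j1) * X (Gen.h j4), by ring⟩
            | exact dvd_mem hrel ⟨X (Gen.h j1) * X (Gen.h j3), by ring⟩
            | exact dvd_mem hrel ⟨X (Gen.h j1) * X (Gen.h j2), by ring⟩)

/-- For all `t ≥ 1` with `t ≠ 2` and `u ≥ 1`, the component
`E^{4, 4 + n_{1,t,u}} = E^{4, 2^{t+u+1}+2^{t+1}+3}` is zero. -/
theorem stmt5 (t u : ℕ) (ht : 1 ≤ t) (ht2 : t ≠ 2) (hu : 1 ≤ u) :
    component 4 (2 ^ (t + u + 1) + 2 ^ (t + 1) + 3) = ⊥ := by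
  rw [eq_bot_iff]
  rintro x hx
  obtain ⟨p, hp, rfl⟩ := hx
  obtain ⟨hp4, hpd⟩ := hp
  rw [SetLike.mem_coe, mem_weightedHomogeneousSubmodule] at hp4 hpd
  simp only [Submodule.mem_bot, AlgHom.toLinearMap_apply]
  rw [mkE, Ideal.Quotient.mkₐ_eq_mk, Ideal.Quotient.eq_zero_iff_mem]
  rw [← p.support_sum_monomial_coeff]
  apply Submodule.sum_mem
  intro σ hσ
  have h4 : Finsupp.weight hdeg σ = 4 := hp4 (mem_support_iff.mp hσ)
  have hdd : Finsupp.weight ideg σ = 2 ^ (t + u + 1) + 2 ^ (t + 1) + 3 :=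
    hpd (mem_support_iff.mp hσ)
  have hmono : (monomial σ (coeff σ p) : P) = C (coeff σ p) * monomial σ 1 := by
    rw [C_mul_monomial, mul_one]
  rw [hmono]
  exact Ideal.mul_mem_left _ _ (key t u ht ht2 hu σ h4 hdd)
end
end
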